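/- Let r₀ ∈ ℝ, δ > 0, and let f : (r₀, r₀ + δ) → ℝ be positive and differentiable with f'(r)/f(r) = −1/(2(r − r₀)) + O(1) as r → r₀⁺ (that is, f'(r)/f(r) + 1/(2(r − r₀)) is bounded on (r₀, r₀ + δ)). Then there exists a constant c > 0 such that f(r) = c·(r − r₀)^{−1/2} + O((r − r₀)^{1/2}) as r → r₀⁺. -/

import Mathlib

open Set Filter MeasureTheory Asymptotics Topology

private lemma exp_lip {a b M : ℝ} (ha : a ≤ M) (hb : b ≤ M) :
    |Real.exp a - Real.exp b| ≤ Real.exp M * |a - b| := by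
  have := Convex.norm_image_sub_le_of_norm_hasDerivWithin_le
    (f := Real.exp) (f' := Real.exp) (s := Iic M) (C := Real.exp M)
    (fun x _ => (Real.hasDerivAt_exp x).hasDerivWithinAt)
    (fun x hx => by
      simpa [Real.abs_exp] using Real.exp_le_exp.2 (mem_Iic.1 hx))
    (convex_Iic M) hb ha
  simpa [Real.norm_eq_abs] using this

/-- If `f > 0` is differentiable on `(r₀, r₀+δ)` with logarithmic
derivative `f'/f = −1/(2(r−r₀)) + O(1)` as `r → r₀⁺` (the difference bounded on the
interval), then there is `c > 0` with `f(r) = c(r−r₀)^{−1/2} + O((r−r₀)^{1/2})`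
as `r → r₀⁺`. -/
theorem log_derivative_integration
    (r₀ δ : ℝ) (hδ : 0 < δ) (f f' : ℝ → ℝ)
    (hfpos : ∀ r ∈ Ioo r₀ (r₀ + δ), 0 < f r)
    (hf : ∀ r ∈ Ioo r₀ (r₀ + δ), HasDerivAt f (f' r) r)
    (hbd : ∃ C : ℝ, ∀ r ∈ Ioo r₀ (r₀ + δ), |f' r / f r + 1 / (2 * (r - r₀))| ≤ C) :
    ∃ c > 0, (fun r => f r - c * (r - r₀) ^ (-(1:ℝ)/2)) =O[𝓝[>] r₀]
      (fun r => (r - r₀) ^ ((1:ℝ)/2)) := by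
  obtain ⟨C, hC⟩ := hbd
  set s : Set ℝ := Ioo r₀ (r₀ + δ) with hs
  have hm : r₀ + δ/2 ∈ s := ⟨by linarith, by linarith⟩
  have hC0 : 0 ≤ C := le_trans (abs_nonneg _) (hC _ hm)
  set h : ℝ → ℝ := fun r => Real.log (f r) + (1/2) * Real.log (r - r₀) with hh
  have hderiv : ∀ r ∈ s, HasDerivAt h (f' r / f r + 1 / (2 * (r - r₀))) r := by
    intro r hr
    have hr0 : r - r₀ ≠ 0 := by have := hr.1; intro hne; rw [sub_eq_zero] at hne; linarith
    have h1 : HasDerivAt (fun r => Real.log (f r)) (f' r / f r) r :=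
      (hf r hr).log (ne_of_gt (hfpos r hr))
    have h2 : HasDerivAt (fun r => Real.log (r - r₀)) (1 / (r - r₀)) r := by
      have := ((hasDerivAt_id r).sub_const r₀).log hr0
      simpa using this
    have h3 := h1.add (h2.const_mul (1/2))
    exact h3.congr_deriv (by simp only [one_div, mul_inv])
  have key : ∀ x ∈ s, ∀ y ∈ s, |h y - h x| ≤ C * |y - x| := by
    intro x hx y hy
    have := Convex.norm_image_sub_le_of_norm_hasDerivWithin_le
      (f := h) (f' := fun r => f' r / f r + 1 / (2 * (r - r₀))) (s := s) (C := C)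
      (fun r hr => (hderiv r hr).hasDerivWithinAt)
      (fun r hr => by simpa [Real.norm_eq_abs] using hC r hr)
      (convex_Ioo _ _) hx hy
    simpa [Real.norm_eq_abs] using this
  set φ : ℝ → ℝ := fun r => h r + C * r with hφ
  have hmono : MonotoneOn φ s := by
    intro x hx y hy hxy
    have h1 := key x hx y hy
    rw [abs_of_nonneg (by linarith : (0:ℝ) ≤ y - x)] at h1
    have h2 := (abs_le.1 h1).1
    simp only [hφ]; linarith
  have hbdd : BddBelow (φ '' s) := by
    refine ⟨h (r₀ + δ/2) - C * δ + C * r₀, ?_⟩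
    rintro _ ⟨r, hr, rfl⟩
    have h1 := key r hr (r₀ + δ/2) hm
    have h2 : |r₀ + δ/2 - r| ≤ δ := by
      rw [abs_le]; obtain ⟨a, b⟩ := hr; constructor <;> linarith
    have h3 : h (r₀ + δ/2) - h r ≤ C * δ :=
      le_trans (le_abs_self _) (le_trans h1 (by nlinarith))
    have h4 : C * r₀ ≤ C * r := by nlinarith [hr.1]
    simp only [hφ]; linarith
  set L : ℝ := sInf (φ '' s) with hL
  have hφlim : Tendsto φ (𝓝[>] r₀) (𝓝 L) :=
    hmono.tendsto_nhdsWithin_Ioo_right ⟨_, hm⟩ hbdd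
  set L₀ : ℝ := L - C * r₀ with hL₀
  have hhlim : Tendsto h (𝓝[>] r₀) (𝓝 L₀) := by
    have hid : Tendsto (fun r : ℝ => C * r) (𝓝[>] r₀) (𝓝 (C * r₀)) :=
      (tendsto_id.mono_left nhdsWithin_le_nhds).const_mul C
    have := hφlim.sub hid
    simpa only [hφ, add_sub_cancel_right] using this
  -- quantitative bound
  have hq : ∀ r ∈ s, |h r - L₀| ≤ C * (r - r₀) := by
    intro r hr
    have hF : Tendsto (fun t => |h r - h t|) (𝓝[>] r₀) (𝓝 |h r - L₀|) :=
      (tendsto_const_nhds.sub hhlim).abs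
    have hG : Tendsto (fun t => C * (r - t)) (𝓝[>] r₀) (𝓝 (C * (r - r₀))) :=
      ((tendsto_const_nhds.sub (tendsto_id.mono_left nhdsWithin_le_nhds)).const_mul C)
    refine le_of_tendsto_of_tendsto hF hG ?_
    filter_upwards [Ioo_mem_nhdsGT_of_mem (left_mem_Ico.2 hr.1)] with t ht
    have hts : t ∈ s := ⟨ht.1, lt_trans ht.2 hr.2⟩
    have := key t hts r hr
    calc |h r - h t| ≤ C * |r - t| := this
      _ = C * (r - t) := by rw [abs_of_nonneg (by linarith [ht.2])]
  refine ⟨Real.exp L₀, Real.exp_pos _, ?_⟩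
  rw [isBigO_iff]
  refine ⟨Real.exp (L₀ + C * δ) * C, ?_⟩
  filter_upwards [Ioo_mem_nhdsGT_of_mem (left_mem_Ico.2 (by linarith : r₀ < r₀ + δ))] with r hr
  have hx : 0 < r - r₀ := sub_pos.2 hr.1
  have hexp : Real.exp (h r) = f r * (r - r₀) ^ ((1:ℝ)/2) := by
    rw [hh]
    rw [Real.exp_add, Real.exp_log (hfpos r hr)]
    congr 1
    rw [Real.rpow_def_of_pos hx]
    ring_nf
  have hfr : f r - Real.exp L₀ * (r - r₀) ^ (-(1:ℝ)/2)
      = (Real.exp (h r) - Real.exp L₀) * (r - r₀) ^ (-(1:ℝ)/2) := by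
    rw [hexp, sub_mul, mul_assoc, ← Real.rpow_add hx]
    norm_num
  have hub : h r ≤ L₀ + C * δ := by
    have := (abs_le.1 (hq r hr)).2
    have : h r ≤ L₀ + C * (r - r₀) := by linarith
    have h2 : C * (r - r₀) ≤ C * δ := by nlinarith [hr.2, hr.1]
    linarith
  have hlip : |Real.exp (h r) - Real.exp L₀| ≤ Real.exp (L₀ + C * δ) * |h r - L₀| :=
    exp_lip hub (by nlinarith : L₀ ≤ L₀ + C * δ)
  have hpow : (r - r₀) * (r - r₀) ^ (-(1:ℝ)/2) = (r - r₀) ^ ((1:ℝ)/2) := by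
    nth_rewrite 1 [← Real.rpow_one (r - r₀)]
    rw [← Real.rpow_add hx]
    norm_num
  rw [Real.norm_eq_abs, Real.norm_eq_abs, hfr]
  rw [abs_mul, abs_of_nonneg (Real.rpow_nonneg hx.le _),
      abs_of_nonneg (Real.rpow_nonneg hx.le _)]
  calc |Real.exp (h r) - Real.exp L₀| * (r - r₀) ^ (-(1:ℝ)/2)
      ≤ (Real.exp (L₀ + C * δ) * (C * (r - r₀))) * (r - r₀) ^ (-(1:ℝ)/2) := by
        apply mul_le_mul_of_nonneg_right _ (Real.rpow_nonneg hx.le _)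
        exact le_trans hlip (mul_le_mul_of_nonneg_left (hq r hr) (Real.exp_pos _).le)
    _ = Real.exp (L₀ + C * δ) * C * ((r - r₀) * (r - r₀) ^ (-(1:ℝ)/2)) := by ring
    _ = Real.exp (L₀ + C * δ) * C * (r - r₀) ^ ((1:ℝ)/2) := by rw [hpow]
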